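/- Integration by parts formula: for p : ℕ → ℝ nonnegative summable with suitable decay, and any bounded φ : ℕ → ℝ, one has ∑_{n≥0} L[p]_n·φ(n) = ∑_{n≥0} (r̄·p_n - p_{n+1})·(φ(n+1) - φ(n)), where r̄ = 1 - p_0 and L is the unbiased-exchange operator. -/

import Mathlib

/-- The unbiased-exchange operator. -/
noncomputable def Lop (p : ℕ → ℝ) : ℕ → ℝ := fun n : ℕ =>
  if n = 0 then p 1 - (1 - p 0) * p 0
  else p (n + 1) + (1 - p 0) * p (n - 1) - (1 + (1 - p 0)) * p n

theorem integration_by_parts (p : ℕ → ℝ) (hpos : ∀ n, 0 ≤ p n)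
    (hsum : Summable p) (htot : ∑' n : ℕ, p n = 1)
    (hmean : Summable (fun n : ℕ => (n : ℝ) * p n))
    (φ : ℕ → ℝ) (hφ : ∃ B : ℝ, ∀ n, |φ n| ≤ B) :
    ∑' n : ℕ, Lop p n * φ n
      = ∑' n : ℕ, ((1 - p 0) * p n - p (n + 1)) * (φ (n + 1) - φ n) := by
  obtain ⟨B, hB⟩ := hφ
  set a : ℕ → ℝ := fun n => (1 - p 0) * p n - p (n + 1) with ha_def
  set b : ℕ → ℝ := fun n => if n = 0 then 0 else a (n - 1) * φ n with hb_def
  have hp1 : Summable (fun n => p (n + 1)) := (summable_nat_add_iff 1).2 hsum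
  have ha : Summable a := (hsum.mul_left _).sub hp1
  have haφ : Summable (fun n => a n * φ n) := by
    apply Summable.of_norm_bounded (ha.abs.mul_right B)
    intro n
    rw [Real.norm_eq_abs, abs_mul]
    exact mul_le_mul_of_nonneg_left (hB n) (abs_nonneg _)
  have haφ' : Summable (fun n => a n * φ (n + 1)) := by
    apply Summable.of_norm_bounded (ha.abs.mul_right B)
    intro n
    rw [Real.norm_eq_abs, abs_mul]
    exact mul_le_mul_of_nonneg_left (hB _) (abs_nonneg _)
  have hb : Summable b := by
    apply (summable_nat_add_iff 1).1
    simpa [hb_def] using haφ'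
  have key : ∀ n, Lop p n * φ n = b n - a n * φ n := by
    intro n
    cases n with
    | zero => simp [Lop, hb_def, ha_def]; ring
    | succ m => simp [Lop, hb_def, ha_def]; ring
  calc ∑' n : ℕ, Lop p n * φ n
      = ∑' n : ℕ, (b n - a n * φ n) := tsum_congr key
    _ = (∑' n : ℕ, b n) - ∑' n : ℕ, a n * φ n := Summable.tsum_sub hb haφ
    _ = (∑' n : ℕ, a n * φ (n + 1)) - ∑' n : ℕ, a n * φ n := by
        rw [Summable.tsum_eq_zero_add hb]
        simp [hb_def]
    _ = ∑' n : ℕ, ((1 - p 0) * p n - p (n + 1)) * (φ (n + 1) - φ n) := by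
        rw [← Summable.tsum_sub haφ' haφ]
        exact tsum_congr fun n => by ring
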